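/- Suppose the labels are zero (zero teacher, y_i = 0 for all i), m > n, 0 < ηλ < 1, and the initialization θ^{(0)} is drawn from the Gaussian measure N(0, ν²I_m) on ℝ^m with ν² > 0. Then with probability at least 1 − 2·e^{−(m−n)/32} over θ^{(0)}, the gradient-descent iterates satisfy, for every t ∈ ℕ, L(θ^{(t)}) ≥ λ_min(Σ)·(1 − ηλ)^{2t}·(m − n)·ν²/2. -/

import Mathlib

open MeasureTheory ProbabilityTheory Finset Filter
open scoped RealInnerProductSpace NNReal ENNReal

noncomputable section

/-- One gradient-descent step on the ridge objective `L_n(θ;λ)`: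
`θ ↦ θ − η•∇L_n(θ;λ)`, where `∇L_n(θ;λ) = (1/n)∑ᵢ(⟨θ,φᵢ⟩−yᵢ)•φᵢ + λ•θ`. -/
def gdStep (m n : ℕ) (φ : Fin n → EuclideanSpace ℝ (Fin m)) (y : Fin n → ℝ)
    (η lam : ℝ) (θ : EuclideanSpace ℝ (Fin m)) : EuclideanSpace ℝ (Fin m) :=
  θ - η • ((n : ℝ)⁻¹ • ∑ i, (⟪θ, φ i⟫ - y i) • φ i + lam • θ)

/-- Gradient-descent iterates `θ^{(t)}` started at `θ0`. -/
def gdIter (m n : ℕ) (φ : Fin n → EuclideanSpace ℝ (Fin m)) (y : Fin n → ℝ)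
    (η lam : ℝ) (θ0 : EuclideanSpace ℝ (Fin m)) : ℕ → EuclideanSpace ℝ (Fin m)
  | 0 => θ0
  | t + 1 => gdStep m n φ y η lam (gdIter m n φ y η lam θ0 t)

/-- The unregularized training loss `L_n(θ) = (1/(2n)) ∑ᵢ (⟨θ,φᵢ⟩ − yᵢ)²`. -/
def trainLoss (m n : ℕ) (φ : Fin n → EuclideanSpace ℝ (Fin m)) (y : Fin n → ℝ)
    (θ : EuclideanSpace ℝ (Fin m)) : ℝ :=
  (1 / (2 * n) : ℝ) * ∑ i, (⟪θ, φ i⟫ - y i) ^ 2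

/-- The ridge objective `L_n(θ;λ) = L_n(θ) + (λ/2)‖θ‖²`. -/
def ridgeObj (m n : ℕ) (φ : Fin n → EuclideanSpace ℝ (Fin m)) (y : Fin n → ℝ)
    (lam : ℝ) (θ : EuclideanSpace ℝ (Fin m)) : ℝ :=
  trainLoss m n φ y θ + (lam / 2) * ‖θ‖ ^ 2

/-- The average squared feature norm `L = (1/n) ∑ᵢ ‖φᵢ‖²`. -/
def featNormAvg (m n : ℕ) (φ : Fin n → EuclideanSpace ℝ (Fin m)) : ℝ :=
  (1 / n : ℝ) * ∑ i, ‖φ i‖ ^ 2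

/-- The Gaussian measure `N(0, v·I_m)` on `ℝ^m` (`v` stands for the variance `ν²`),
realized as the product of `m` i.i.d. real Gaussians `N(0, v)`. -/
def stdGaussian (m : ℕ) (v : ℝ≥0) : Measure (EuclideanSpace ℝ (Fin m)) :=
  (Measure.pi fun _ : Fin m => gaussianReal 0 v).map
    (EuclideanSpace.equiv (Fin m) ℝ).symm

/-- The smallest strictly positive eigenvalue `λ_min⁺(Φ^⊤Φ)` of the Gram matrix
`Φ^⊤Φ = ∑ᵢ φᵢφᵢ^⊤`, viewed as the operator `w ↦ ∑ᵢ ⟨w,φᵢ⟩•φᵢ` on `ℝ^m`. -/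
def lamMinPosOf (m n : ℕ) (φ : Fin n → EuclideanSpace ℝ (Fin m)) : ℝ :=
  sInf {μ : ℝ | 0 < μ ∧ ∃ w : EuclideanSpace ℝ (Fin m), w ≠ 0 ∧
    ∑ i, ⟪w, φ i⟫ • φ i = μ • w}

/-- The population squared loss `L(θ) = E_{x∼D}[⟨θ − θ*, φ(x)⟩²]`. -/
def popLoss (d m : ℕ) (D : Measure (EuclideanSpace ℝ (Fin d)))
    (φmap : EuclideanSpace ℝ (Fin d) → EuclideanSpace ℝ (Fin m))
    (θstar θ : EuclideanSpace ℝ (Fin m)) : ℝ :=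
  ∫ x, (⟪θ - θstar, φmap x⟫) ^ 2 ∂D

section ZeroTeacherAux

open Real Matrix

/- ... auxiliary lemmas inserted here ... -/


lemma lintegral_pi_prod : ∀ {N : ℕ} (μ : Fin N → Measure ℝ), (∀ i, SigmaFinite (μ i)) →
    ∀ (f : Fin N → ℝ → ℝ≥0∞), (∀ i, Measurable (f i)) →
    ∫⁻ x, ∏ i, f i (x i) ∂Measure.pi μ = ∏ i, ∫⁻ y, f i y ∂μ i := by
  intro N
  induction N with
  | zero =>
    intro μ _ f _
    simp [Measure.pi_of_empty]
  | succ N ih =>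
    intro μ hσ f hf
    have := hσ
    have hmp := measurePreserving_piFinSuccAbove μ 0
    have hg : Measurable (fun y : ℝ × (Fin N → ℝ) => f 0 y.1 * ∏ j, f (Fin.succ j) (y.2 j)) := by
      apply Measurable.mul
      · exact (hf 0).comp measurable_fst
      · exact Finset.measurable_prod _ fun j _ =>
          (hf _).comp ((measurable_pi_apply j).comp measurable_snd)
    calc ∫⁻ x, ∏ i, f i (x i) ∂Measure.pi μ
        = ∫⁻ x, (fun y : ℝ × (Fin N → ℝ) => f 0 y.1 * ∏ j, f (Fin.succ j) (y.2 j))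
            ((MeasurableEquiv.piFinSuccAbove (fun _ : Fin (N+1) => ℝ) 0) x) ∂Measure.pi μ := by
          apply lintegral_congr
          intro x
          simp [MeasurableEquiv.piFinSuccAbove_apply, Fin.prod_univ_succ, Fin.zero_succAbove, Fin.tail]
      _ = ∫⁻ y, f 0 y.1 * ∏ j, f (Fin.succ j) (y.2 j)
            ∂((μ 0).prod (Measure.pi fun j => μ ((0 : Fin (N+1)).succAbove j))) :=
          hmp.lintegral_comp hg
      _ = (∫⁻ y, f 0 y ∂μ 0) * ∏ j, ∫⁻ y, f (Fin.succ j) y ∂μ (Fin.succ j) := by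
          simp only [Fin.zero_succAbove]
          rw [lintegral_prod_mul (f := f 0) (g := fun p : Fin N → ℝ => ∏ j, f (Fin.succ j) (p j))
            (hf 0).aemeasurable
            (Finset.measurable_prod _ fun j _ => (hf _).comp (measurable_pi_apply j)).aemeasurable]
          rw [ih _ (fun j => hσ _) _ (fun j => hf _)]
      _ = ∏ i, ∫⁻ y, f i y ∂μ i := (Fin.prod_univ_succ fun i => ∫⁻ y, f i y ∂μ i).symm

lemma map_withDensity_equiv {α β : Type*} [MeasurableSpace α] [MeasurableSpace β]
    (e : α ≃ᵐ β) (μ : Measure α) (g : α → ℝ≥0∞) (hg : Measurable g) :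
    (μ.withDensity g).map e = (μ.map e).withDensity (fun b => g (e.symm b)) := by
  ext A hA
  rw [Measure.map_apply e.measurable hA, withDensity_apply _ (e.measurable hA),
    withDensity_apply _ hA, setLIntegral_map (f := fun b => g (e.symm b)) hA (by exact hg.comp e.symm.measurable) e.measurable]
  apply lintegral_congr
  intro x
  simp


lemma measurable_prod_gaussianPDF (m : ℕ) (v : ℝ≥0) :
    Measurable (fun x : Fin m → ℝ => ∏ i, gaussianPDF 0 v (x i)) :=
  Finset.measurable_prod _ fun i _ => (measurable_gaussianPDF 0 v).comp (measurable_pi_apply i)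

lemma pi_gaussian_eq (m : ℕ) {v : ℝ≥0} (hv : v ≠ 0) :
    ((Measure.pi fun _ : Fin m => (volume : Measure ℝ)).withDensity
        fun x => ∏ i, gaussianPDF 0 v (x i))
      = Measure.pi fun _ : Fin m => gaussianReal 0 v := by
  refine (Measure.pi_eq (μ := fun _ : Fin m => gaussianReal 0 v)
    (μ' := (Measure.pi fun _ : Fin m => (volume : Measure ℝ)).withDensity
      fun x => ∏ i, gaussianPDF 0 v (x i)) fun s hs => ?_).symm
  rw [withDensity_apply _ (MeasurableSet.univ_pi hs),
    ← lintegral_indicator (MeasurableSet.univ_pi hs)]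
  have hpt : ∀ x : Fin m → ℝ,
      (Set.univ.pi s).indicator (fun x => ∏ i, gaussianPDF 0 v (x i)) x
        = ∏ i, ((s i).indicator (fun y => gaussianPDF 0 v y) (x i)) := by
    intro x
    by_cases hx : x ∈ Set.univ.pi s
    · rw [Set.indicator_of_mem hx]
      refine Finset.prod_congr rfl fun i _ => ?_
      rw [Set.indicator_of_mem (hx i (Set.mem_univ i))]
    · rw [Set.indicator_of_notMem hx]
      simp only [Set.mem_pi, Set.mem_univ, forall_true_left] at hx
      push_neg at hx
      obtain ⟨j, hj⟩ := hx
      exact (Finset.prod_eq_zero (Finset.mem_univ j)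
        (by rw [Set.indicator_of_notMem hj])).symm
  rw [lintegral_congr hpt,
    lintegral_pi_prod _ (fun _ => inferInstance) _
      (fun i => (measurable_gaussianPDF 0 v).indicator (hs i))]
  refine Finset.prod_congr rfl fun i _ => ?_
  rw [gaussianReal_of_var_ne_zero _ hv, withDensity_apply _ (hs i),
    ← lintegral_indicator (hs i)]

lemma euclid_norm_sq {m : ℕ} (θ : EuclideanSpace ℝ (Fin m)) :
    ‖θ‖ ^ 2 = ∑ i, (θ i) ^ 2 := by
  rw [EuclideanSpace.norm_eq, Real.sq_sqrt (by positivity)]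
  refine Finset.sum_congr rfl fun i _ => by rw [Real.norm_eq_abs, sq_abs]

lemma prod_gaussianPDF_eq (m : ℕ) (v : ℝ≥0) (θ : EuclideanSpace ℝ (Fin m)) :
    (∏ i, gaussianPDF 0 v (θ i))
      = ENNReal.ofReal ((√(2 * π * v))⁻¹ ^ m * rexp (-‖θ‖ ^ 2 / (2 * v))) := by
  simp only [gaussianPDF, gaussianPDFReal, sub_zero]
  rw [← ENNReal.ofReal_prod_of_nonneg (fun i _ => by positivity)]
  congr 1
  rw [Finset.prod_mul_distrib, Finset.prod_const, ← Real.exp_sum, Finset.card_univ,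
    Fintype.card_fin, euclid_norm_sq]
  congr 1
  rw [← Finset.sum_div, ← Finset.sum_neg_distrib]


lemma stdGaussian_eq_withDensity (m : ℕ) {v : ℝ≥0} (hv : v ≠ 0) :
    stdGaussian m v = (volume : Measure (EuclideanSpace ℝ (Fin m))).withDensity
      (fun θ => ∏ i, gaussianPDF 0 v (θ i)) := by
  rw [_root_.stdGaussian, ← pi_gaussian_eq m hv]
  have hco : ⇑(EuclideanSpace.equiv (Fin m) ℝ).symm
      = ⇑(MeasurableEquiv.toLp 2 (Fin m → ℝ)) := rfl
  rw [hco, map_withDensity_equiv _ _ _ (measurable_prod_gaussianPDF m v)]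
  have h1 : (Measure.pi fun _ : Fin m => (volume : Measure ℝ)).map
      ⇑(MeasurableEquiv.toLp 2 (Fin m → ℝ))
      = (volume : Measure (EuclideanSpace ℝ (Fin m))) := by
    rw [← MeasureTheory.volume_pi]
    exact (PiLp.volume_preserving_toLp (Fin m)).map_eq
  rw [h1]
  congr 1

lemma stdGaussian_map_isometry (m : ℕ) {v : ℝ≥0} (hv : v ≠ 0)
    (L : EuclideanSpace ℝ (Fin m) ≃ₗᵢ[ℝ] EuclideanSpace ℝ (Fin m)) :
    (stdGaussian m v).map L = stdGaussian m v := by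
  rw [stdGaussian_eq_withDensity m hv]
  have hco : ⇑L = ⇑(L.toHomeomorph.toMeasurableEquiv) := rfl
  rw [hco, map_withDensity_equiv (L.toHomeomorph.toMeasurableEquiv) volume
    (fun θ => ∏ i, gaussianPDF 0 v (θ i))
    (by exact Finset.measurable_prod Finset.univ fun i _ =>
      (measurable_gaussianPDF 0 v).comp ((measurable_pi_apply i).comp (WithLp.measurable_ofLp 2 _)))]
  have h1 : (volume : Measure (EuclideanSpace ℝ (Fin m))).map
      ⇑(L.toHomeomorph.toMeasurableEquiv) = volume := L.measurePreserving.map_eq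
  rw [h1]
  congr 1
  funext θ
  show (∏ i, gaussianPDF 0 v ((L.symm θ) i)) = ∏ i, gaussianPDF 0 v (θ i)
  rw [prod_gaussianPDF_eq, prod_gaussianPDF_eq, L.symm.norm_map]


lemma lintegral_exp_neg_sq_gaussian {v : ℝ≥0} (hv : 0 < v) :
    ∫⁻ y, ENNReal.ofReal (rexp (-(y ^ 2) * (2 * (v : ℝ))⁻¹)) ∂gaussianReal 0 v
      = ENNReal.ofReal ((√2)⁻¹) := by
  have hv' : (0 : ℝ) < v := hv
  rw [gaussianReal_of_var_ne_zero _ hv.ne',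
    lintegral_withDensity_eq_lintegral_mul _ (measurable_gaussianPDF 0 v)
      (by exact ((measurable_id.pow_const 2).neg.mul_const _).exp.ennreal_ofReal)]
  have hpt : ∀ y : ℝ, (gaussianPDF 0 v * fun y => ENNReal.ofReal (rexp (-(y ^ 2) * (2 * (v:ℝ))⁻¹))) y
      = ENNReal.ofReal ((√(2 * π * v))⁻¹ * rexp (-(v:ℝ)⁻¹ * y ^ 2)) := by
    intro y
    simp only [Pi.mul_apply, gaussianPDF, gaussianPDFReal, sub_zero]
    rw [← ENNReal.ofReal_mul (by positivity)]
    congr 1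
    rw [mul_assoc, ← Real.exp_add]
    congr 2
    field_simp
    ring
  rw [lintegral_congr hpt, ← ofReal_integral_eq_lintegral_ofReal]
  · rw [MeasureTheory.integral_const_mul, integral_gaussian]
    congr 1
    have hπv : π / ((v:ℝ)⁻¹) = π * v := by field_simp
    have h2 : √(π * (v:ℝ)) ≠ 0 := by positivity
    rw [hπv, mul_assoc, Real.sqrt_mul (by norm_num : (0:ℝ) ≤ 2), mul_inv, mul_assoc,
      inv_mul_cancel₀ h2, mul_one]
  · exact (integrable_exp_neg_mul_sq (by positivity)).const_mul _
  · exact Filter.Eventually.of_forall fun y => by positivity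

set_option maxHeartbeats 1000000 in
lemma pi_gaussian_chernoff (m k : ℕ) {v : ℝ≥0} (hv : 0 < v)
    (T : Finset (Fin m)) (hT : T.card = k) :
    (Measure.pi fun _ : Fin m => gaussianReal 0 v)
        {x : Fin m → ℝ | ∑ i ∈ T, (x i) ^ 2 ≤ (k : ℝ) * v / 2}
      ≤ ENNReal.ofReal (rexp (-(k : ℝ) / 32)) := by
  have hv' : (0 : ℝ) < v := hv
  set s0 : ℝ := (2 * (v : ℝ))⁻¹ with hs0
  have hs0pos : 0 < s0 := by positivity
  set a : ℝ := (k : ℝ) * v / 2 with ha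
  set f : Fin m → ℝ → ℝ≥0∞ := fun i y =>
    if i ∈ T then ENNReal.ofReal (rexp (-(y ^ 2) * s0)) else 1 with hf
  have hfm : ∀ i, Measurable (f i) := by
    intro i
    by_cases hi : i ∈ T <;> simp only [hf, hi, if_true, if_false]
    · exact ((measurable_id.pow_const 2).neg.mul_const _).exp.ennreal_ofReal
    · exact measurable_const
  have hBm : MeasurableSet {x : Fin m → ℝ | ∑ i ∈ T, (x i) ^ 2 ≤ a} := by
    exact measurableSet_le (Finset.measurable_sum _ fun i _ =>
      (measurable_pi_apply i).pow_const 2) measurable_const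
  have hbound : ∀ x : Fin m → ℝ,
      ({x : Fin m → ℝ | ∑ i ∈ T, (x i) ^ 2 ≤ a}.indicator (fun _ => (1 : ℝ≥0∞)) x)
        ≤ ENNReal.ofReal (rexp (s0 * a)) * ∏ i, f i (x i) := by
    intro x
    by_cases hx : x ∈ {x : Fin m → ℝ | ∑ i ∈ T, (x i) ^ 2 ≤ a}
    · rw [Set.indicator_of_mem hx]
      have h1 : (∏ i, f i (x i)) = ∏ i ∈ T, ENNReal.ofReal (rexp (-(x i ^ 2) * s0)) := by
        rw [← Finset.prod_subset (Finset.subset_univ T)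
          (fun i _ hi => by simp only [hf, hi, if_false])]
        exact Finset.prod_congr rfl fun i hi => by simp only [hf, hi, if_true]
      rw [h1, ← ENNReal.ofReal_prod_of_nonneg (fun i _ => (Real.exp_pos _).le),
        ← Real.exp_sum, ← ENNReal.ofReal_mul (Real.exp_pos _).le, ← Real.exp_add]
      rw [← ENNReal.ofReal_one]
      apply ENNReal.ofReal_le_ofReal
      rw [← Real.exp_zero]
      apply Real.exp_le_exp.2
      have hS : ∑ i ∈ T, -(x i ^ 2) * s0 = -(∑ i ∈ T, x i ^ 2) * s0 := by
        rw [← Finset.sum_mul, ← Finset.sum_neg_distrib]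
      rw [hS]
      have hxS : ∑ i ∈ T, x i ^ 2 ≤ a := hx
      nlinarith [hs0pos]
    · rw [Set.indicator_of_notMem hx]
      exact zero_le
  calc (Measure.pi fun _ : Fin m => gaussianReal 0 v) {x : Fin m → ℝ | ∑ i ∈ T, (x i) ^ 2 ≤ a}
      = ∫⁻ x, {x : Fin m → ℝ | ∑ i ∈ T, (x i) ^ 2 ≤ a}.indicator (fun _ => (1:ℝ≥0∞)) x ∂(Measure.pi fun _ : Fin m => gaussianReal 0 v) := by
        exact (lintegral_indicator_one hBm).symm
    _ ≤ ∫⁻ x, ENNReal.ofReal (rexp (s0 * a)) * ∏ i, f i (x i) ∂(Measure.pi fun _ : Fin m => gaussianReal 0 v) :=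
        lintegral_mono hbound
    _ = ENNReal.ofReal (rexp (s0 * a)) * ∏ i, ∫⁻ y, f i y ∂gaussianReal 0 v := by
        have hmprod : Measurable (fun x : Fin m → ℝ => ∏ i, f i (x i)) :=
          Finset.measurable_prod Finset.univ
            (fun i _ => (hfm i).comp' (measurable_pi_apply i))
        rw [lintegral_const_mul _ hmprod, lintegral_pi_prod _ (fun _ => inferInstance) _ hfm]
    _ = ENNReal.ofReal (rexp (s0 * a)) * ENNReal.ofReal ((√2)⁻¹) ^ k := by
        congr 1
        have : ∀ i, ∫⁻ y, f i y ∂gaussianReal 0 v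
            = if i ∈ T then ENNReal.ofReal ((√2)⁻¹) else 1 := by
          intro i
          by_cases hi : i ∈ T <;> simp only [hf, hi, if_true, if_false]
          · exact lintegral_exp_neg_sq_gaussian hv
          · simp
        rw [Finset.prod_congr rfl fun i _ => this i,
          ← Finset.prod_subset (Finset.subset_univ T) (fun i _ hi => by rw [if_neg hi]),
          Finset.prod_congr rfl (fun i hi => if_pos hi), Finset.prod_const, hT]
    _ ≤ ENNReal.ofReal (rexp (-(k : ℝ) / 32)) := by
        rw [← ENNReal.ofReal_pow (by positivity), ← ENNReal.ofReal_mul (Real.exp_pos _).le]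
        apply ENNReal.ofReal_le_ofReal
        have hsa : s0 * a = (k : ℝ) / 4 := by
          rw [hs0, ha]; field_simp; ring
        have hpow : ((√2)⁻¹ : ℝ) ^ k = rexp ((k : ℝ) * (-(Real.log 2 / 2))) := by
          rw [← Real.exp_log (by positivity : (0:ℝ) < (√2)⁻¹), ← Real.exp_nat_mul]
          congr 1
          rw [Real.log_inv, Real.log_sqrt (by norm_num : (0:ℝ) ≤ 2)]
        rw [hsa, hpow, ← Real.exp_add]
        apply Real.exp_le_exp.2
        have hlog := Real.log_two_gt_d9
        have hk : (0 : ℝ) ≤ k := Nat.cast_nonneg k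
        nlinarith

lemma integral_quadform (D : Measure (EuclideanSpace ℝ (Fin d)))
    [IsProbabilityMeasure D]
    (φmap : EuclideanSpace ℝ (Fin d) → EuclideanSpace ℝ (Fin m))
    (SigmaMat : Matrix (Fin m) (Fin m) ℝ)
    (hSigma : ∀ j k, SigmaMat j k = ∫ x, φmap x j * φmap x k ∂D)
    (hInt : ∀ j k : Fin m, Integrable (fun x => φmap x j * φmap x k) D)
    (w : Fin m → ℝ) :
    ∫ x, (∑ j, w j * φmap x j) ^ 2 ∂D = w ⬝ᵥ SigmaMat.mulVec w := by
  have hpt : ∀ x, (∑ j, w j * φmap x j) ^ 2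
      = ∑ j, ∑ l, w j * w l * (φmap x j * φmap x l) := by
    intro x
    rw [sq, Finset.sum_mul_sum]
    exact Finset.sum_congr rfl fun j _ => Finset.sum_congr rfl fun l _ => by ring
  simp_rw [hpt]
  rw [integral_finset_sum _ (fun j _ => integrable_finset_sum _
    (fun l _ => (hInt j l).const_mul _))]
  have h2 : ∀ j, ∫ x, ∑ l, w j * w l * (φmap x j * φmap x l) ∂D
      = ∑ l, w j * w l * SigmaMat j l := by
    intro j
    rw [integral_finset_sum _ (fun l _ => (hInt j l).const_mul _)]
    exact Finset.sum_congr rfl fun l _ => by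
      rw [MeasureTheory.integral_const_mul, hSigma j l]
  rw [Finset.sum_congr rfl fun j _ => h2 j]
  simp only [dotProduct, Matrix.mulVec, dotProduct]
  exact Finset.sum_congr rfl fun j _ => by
    rw [Finset.mul_sum]
    exact Finset.sum_congr rfl fun l _ => by ring

lemma rayleigh_min (SigmaMat : Matrix (Fin m) (Fin m) ℝ)
    (hHerm : SigmaMat.IsHermitian) (lamSigma : ℝ)
    (hSigmaleast : ∀ μ : ℝ, (∃ w : Fin m → ℝ, w ≠ 0 ∧ SigmaMat.mulVec w = μ • w) → lamSigma ≤ μ)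
    (θ : Fin m → ℝ) :
    lamSigma * (θ ⬝ᵥ θ) ≤ θ ⬝ᵥ SigmaMat.mulVec θ := by
  set M : Matrix (Fin m) (Fin m) ℝ := SigmaMat - lamSigma • 1 with hM
  have hMH : M.IsHermitian := by
    refine Matrix.IsHermitian.sub hHerm ?_
    refine Matrix.IsHermitian.ext fun i j => ?_
    simp [Matrix.smul_apply, Matrix.one_apply]
    split_ifs with h1 h2 h3 <;> simp_all [eq_comm]
  have heig : ∀ i, 0 ≤ hMH.eigenvalues i := by
    intro i
    have hvec := hMH.mulVec_eigenvectorBasis i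
    have hne : (⇑(hMH.eigenvectorBasis i) : Fin m → ℝ) ≠ 0 := by
      have := hMH.eigenvectorBasis.orthonormal.ne_zero i
      intro hcon
      apply this
      ext j
      exact congrFun hcon j
    have hSv : SigmaMat.mulVec ⇑(hMH.eigenvectorBasis i)
        = (hMH.eigenvalues i + lamSigma) • ⇑(hMH.eigenvectorBasis i) := by
      have hSM : SigmaMat = M + lamSigma • 1 := by rw [hM, sub_add_cancel]
      rw [hSM, Matrix.add_mulVec, hvec, Matrix.smul_mulVec, Matrix.one_mulVec, add_smul]
    have := hSigmaleast _ ⟨_, hne, hSv⟩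
    linarith
  have hPSD : M.PosSemidef := hMH.posSemidef_iff_eigenvalues_nonneg.mpr heig
  have h0 := hPSD.dotProduct_mulVec_nonneg θ
  have hexp : star θ ⬝ᵥ M.mulVec θ = θ ⬝ᵥ SigmaMat.mulVec θ - lamSigma * (θ ⬝ᵥ θ) := by
    have hstar : star θ = θ := by ext j; simp
    rw [hstar, hM, Matrix.sub_mulVec, dotProduct_sub, Matrix.smul_mulVec,
      Matrix.one_mulVec, dotProduct_smul]
    simp [smul_eq_mul]
  rw [hexp] at h0
  simp at h0
  linarith



set_option maxHeartbeats 2000000 in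
/-- zero teacher, `m > n`, `0 < ηλ < 1`, `θ^{(0)} ∼ N(0, ν²I_m)`. With
probability at least `1 − 2e^{−(m−n)/32}` over `θ^{(0)}`, for every `t`,
`L(θ^{(t)}) ≥ λ_min(Σ)(1 − ηλ)^{2t}(m − n)ν²/2`. -/
theorem zero_teacher_population_loss_lower_bound (d n m : ℕ) (hn : 1 ≤ n) (hmn : n < m)
    (D : Measure (EuclideanSpace ℝ (Fin d))) [IsProbabilityMeasure D]
    (φmap : EuclideanSpace ℝ (Fin d) → EuclideanSpace ℝ (Fin m))
    (hφmeas : Measurable φmap)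
    (xs : Fin n → EuclideanSpace ℝ (Fin d))
    (SigmaMat : Matrix (Fin m) (Fin m) ℝ)
    (hSigma : ∀ j k, SigmaMat j k = ∫ x, φmap x j * φmap x k ∂D)
    (hInt : ∀ j k : Fin m, Integrable (fun x => φmap x j * φmap x k) D)
    (lamSigma : ℝ)
    (hSigmaeig : ∃ w : Fin m → ℝ, w ≠ 0 ∧ SigmaMat.mulVec w = lamSigma • w)
    (hSigmaleast : ∀ μ : ℝ, (∃ w : Fin m → ℝ, w ≠ 0 ∧ SigmaMat.mulVec w = μ • w) → lamSigma ≤ μ)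
    (lam η : ℝ) (hlam : 0 < lam) (hη : 0 < η)
    (hetalam0 : 0 < η * lam) (hetalam1 : η * lam < 1)
    (v : ℝ≥0) (hv : 0 < v) :
    ENNReal.ofReal (1 - 2 * Real.exp (-((m : ℝ) - n) / 32)) ≤
      stdGaussian m v
        {θ0 : EuclideanSpace ℝ (Fin m) | ∀ t : ℕ,
          lamSigma * (1 - η * lam) ^ (2 * t) * (((m : ℝ) - n) * v / 2) ≤
            popLoss d m D φmap 0
              (gdIter m n (fun i => φmap (xs i)) (fun _ => 0) η lam θ0 t)} := by
  classical
  set k := m - n with hk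
  have hkm : k ≤ m := Nat.sub_le m n
  have hcast : ((m : ℝ) - n) = (k : ℝ) := by
    rw [hk, Nat.cast_sub hmn.le]
  set φs : Fin n → EuclideanSpace ℝ (Fin m) := fun i => φmap (xs i) with hφs
  set K : Submodule ℝ (EuclideanSpace ℝ (Fin m)) := Submodule.span ℝ (Set.range φs) with hK
  -- dimension counting
  have hKfin : Module.finrank ℝ K ≤ n := by
    have h1 := finrank_span_le_card (R := ℝ) (Set.range φs)
    refine h1.trans ?_
    rw [Set.toFinset_range]
    exact (Finset.card_image_le).trans (by simp)
  have hdim : k ≤ Module.finrank ℝ Kᗮ := by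
    have h2 := Submodule.finrank_add_finrank_orthogonal (K := K)
    rw [finrank_euclideanSpace_fin] at h2
    omega
  -- orthonormal family in Kᗮ extended to an orthonormal basis
  set B2 := stdOrthonormalBasis ℝ Kᗮ with hB2
  set c : Fin m → EuclideanSpace ℝ (Fin m) := fun i =>
    if h : (i : ℕ) < k then (B2 (Fin.castLE hdim ⟨(i : ℕ), h⟩) : EuclideanSpace ℝ (Fin m)) else 0
    with hc
  set s : Set (Fin m) := {i | (i : ℕ) < k} with hs
  have hON : Orthonormal ℝ (s.restrict c) := by
    rw [orthonormal_iff_ite]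
    rintro ⟨i, hi⟩ ⟨j, hj⟩
    have hci : s.restrict c ⟨i, hi⟩ = (B2 (Fin.castLE hdim ⟨(i : ℕ), hi⟩) : EuclideanSpace ℝ (Fin m)) := by
      simp only [Set.restrict_apply, hc]
      exact dif_pos hi
    have hcj : s.restrict c ⟨j, hj⟩ = (B2 (Fin.castLE hdim ⟨(j : ℕ), hj⟩) : EuclideanSpace ℝ (Fin m)) := by
      simp only [Set.restrict_apply, hc]
      exact dif_pos hj
    rw [hci, hcj]
    have := orthonormal_iff_ite.mp B2.orthonormal
      (Fin.castLE hdim ⟨(i : ℕ), hi⟩) (Fin.castLE hdim ⟨(j : ℕ), hj⟩)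
    rw [Submodule.coe_inner] at this
    rw [this]
    congr 1
    simp only [eq_iff_iff]
    constructor
    · intro h
      apply Subtype.ext
      have := congrArg Fin.val h
      simpa [Fin.ext_iff] using this
    · intro h
      have : i = j := by simpa [Subtype.ext_iff, Fin.ext_iff] using h
      simp [this]
  obtain ⟨b, hb⟩ := hON.exists_orthonormalBasis_extension_of_card_eq
    (by simp [finrank_euclideanSpace_fin])
  have hbperp : ∀ i : Fin m, (i : ℕ) < k → b i ∈ Kᗮ := by
    intro i hi
    rw [hb i hi]
    simp only [hc, dif_pos hi]
    exact SetLike.coe_mem _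
  set T : Finset (Fin m) := Finset.univ.filter (fun i => (i : ℕ) < k) with hT
  have hTmem : ∀ i : Fin m, i ∈ T ↔ (i : ℕ) < k := by
    intro i; simp [hT]
  have hTcard : T.card = k := by
    have : T = Finset.map (Fin.castLEEmb hkm) Finset.univ := by
      ext i
      simp only [hT, Finset.mem_filter, Finset.mem_univ, true_and, Finset.mem_map,
        Fin.castLEEmb_apply]
      constructor
      · intro h; exact ⟨⟨(i : ℕ), h⟩, Fin.ext rfl⟩
      · rintro ⟨j, -, rfl⟩; exact j.isLt
    rw [this, Finset.card_map, Finset.card_univ, Fintype.card_fin]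
  -- population loss as a quadratic form
  have hinner : ∀ θ : EuclideanSpace ℝ (Fin m), ∀ x,
      ⟪θ - 0, φmap x⟫ = ∑ j, θ j * φmap x j := by
    intro θ x
    rw [sub_zero]
    simp [PiLp.inner_apply, RCLike.inner_apply, conj_trivial, mul_comm]
  have hpop : ∀ θ : EuclideanSpace ℝ (Fin m),
      popLoss d m D φmap 0 θ = (fun j => θ j) ⬝ᵥ SigmaMat.mulVec (fun j => θ j) := by
    intro θ
    rw [popLoss]
    rw [show (fun x => (⟪θ - 0, φmap x⟫) ^ 2) = fun x => (∑ j, θ j * φmap x j) ^ 2 from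
      funext fun x => by rw [hinner θ x]]
    exact integral_quadform D φmap SigmaMat hSigma hInt (fun j => θ j)
  -- lamSigma is nonnegative
  have hlam0 : 0 ≤ lamSigma := by
    obtain ⟨w, hw0, hww⟩ := hSigmaeig
    have h1 : w ⬝ᵥ SigmaMat.mulVec w = lamSigma * (w ⬝ᵥ w) := by
      rw [hww, dotProduct_smul]; simp [smul_eq_mul]
    have h2 : 0 ≤ w ⬝ᵥ SigmaMat.mulVec w := by
      rw [← integral_quadform D φmap SigmaMat hSigma hInt w]
      exact integral_nonneg fun x => sq_nonneg _
    have h3 : 0 < w ⬝ᵥ w := by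
      obtain ⟨j, hj⟩ := Function.ne_iff.mp hw0
      simp only [Pi.zero_apply] at hj
      have hjj : (0 : ℝ) < w j * w j := by
        rcases lt_or_gt_of_ne hj with h | h
        · exact mul_pos_of_neg_of_neg h h
        · exact mul_pos h h
      refine Finset.sum_pos' (fun i _ => mul_self_nonneg (w i)) ⟨j, Finset.mem_univ j, hjj⟩
    nlinarith
  -- Hermitian
  have hHerm : SigmaMat.IsHermitian := by
    refine Matrix.IsHermitian.ext fun i j => ?_
    rw [hSigma i j, hSigma j i]
    simp only [star_trivial]
    exact congrArg _ (funext fun x => mul_comm _ _)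
  -- the good event
  set A : ℝ := (k : ℝ) * v / 2 with hA
  set F : EuclideanSpace ℝ (Fin m) → ℝ := fun θ => ∑ i ∈ T, ⟪b i, θ⟫ ^ 2 with hF
  have hFcont : Continuous F := by
    apply continuous_finset_sum
    intro i _
    exact ((continuous_const.inner continuous_id).pow 2)
  set G : Set (EuclideanSpace ℝ (Fin m)) := {θ0 | A ≤ F θ0} with hG
  have hGm : MeasurableSet G := measurableSet_le measurable_const hFcont.measurable
  -- deterministic part : G is contained in the event
  have hiter : ∀ (w : EuclideanSpace ℝ (Fin m)), w ∈ Kᗮ →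
      ∀ (θ0 : EuclideanSpace ℝ (Fin m)) (t : ℕ),
      ⟪w, gdIter m n φs (fun _ => 0) η lam θ0 t⟫ = (1 - η * lam) ^ t * ⟪w, θ0⟫ := by
    intro w hw θ0 t
    induction t with
    | zero => simp [gdIter]
    | succ t ih =>
      have hz : ∀ i : Fin n,
          ⟪w, (⟪gdIter m n φs (fun _ => 0) η lam θ0 t, φs i⟫ - (0:ℝ)) • φs i⟫ = 0 := by
        intro i
        have h0 : ⟪φs i, w⟫ = 0 := Submodule.inner_right_of_mem_orthogonal
          (Submodule.subset_span (Set.mem_range_self i)) hw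
        rw [real_inner_comm] at h0
        rw [real_inner_smul_right, h0, mul_zero]
      show ⟪w, gdStep m n φs (fun _ => 0) η lam (gdIter m n φs (fun _ => 0) η lam θ0 t)⟫ = _
      rw [gdStep]
      rw [inner_sub_right, inner_smul_right, inner_add_right, inner_smul_right,
        inner_smul_right, inner_sum]
      rw [Finset.sum_eq_zero fun i _ => hz i]
      rw [ih]
      ring
  have hsub : G ⊆ {θ0 : EuclideanSpace ℝ (Fin m) | ∀ t : ℕ,
      lamSigma * (1 - η * lam) ^ (2 * t) * (((m : ℝ) - n) * v / 2) ≤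
        popLoss d m D φmap 0 (gdIter m n (fun i => φmap (xs i)) (fun _ => 0) η lam θ0 t)} := by
    intro θ0 hθ0
    intro t
    have hθ0' : A ≤ F θ0 := hθ0
    set θt := gdIter m n φs (fun _ => 0) η lam θ0 t with hθt
    have hFt : F θt = (1 - η * lam) ^ (2 * t) * F θ0 := by
      rw [hF]
      simp only
      rw [Finset.mul_sum]
      refine Finset.sum_congr rfl fun i hi => ?_
      rw [hθt, hiter (b i) (hbperp i ((hTmem i).mp hi)) θ0 t, mul_pow, ← pow_mul,
        mul_comm t 2]
    have hbessel : F θt ≤ ‖θt‖ ^ 2 := by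
      have h := b.orthonormal.sum_inner_products_le (s := T) θt
      rw [hF]
      simp only
      refine le_trans (le_of_eq ?_) h
      exact Finset.sum_congr rfl fun i _ => by rw [Real.norm_eq_abs, sq_abs]
    have hnorm : ‖θt‖ ^ 2 = (fun j => θt j) ⬝ᵥ (fun j => θt j) := by
      rw [euclid_norm_sq]
      simp [dotProduct, sq]
    have hray := rayleigh_min SigmaMat hHerm lamSigma hSigmaleast (fun j => θt j)
    have hchain : lamSigma * ((1 - η * lam) ^ (2 * t) * A) ≤ popLoss d m D φmap 0 θt := by
      have h1 : lamSigma * ((1 - η * lam) ^ (2 * t) * A) ≤ lamSigma * F θt := by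
        apply mul_le_mul_of_nonneg_left _ hlam0
        rw [hFt]
        exact mul_le_mul_of_nonneg_left hθ0' (pow_nonneg (by linarith) _)
      have h2 : lamSigma * F θt ≤ lamSigma * ‖θt‖ ^ 2 :=
        mul_le_mul_of_nonneg_left hbessel hlam0
      have h3 : lamSigma * ‖θt‖ ^ 2 ≤ popLoss d m D φmap 0 θt := by
        rw [hpop θt, hnorm]
        exact hray
      linarith
    calc lamSigma * (1 - η * lam) ^ (2 * t) * (((m : ℝ) - n) * ↑v / 2)
        = lamSigma * ((1 - η * lam) ^ (2 * t) * A) := by rw [hA, hcast]; ring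
      _ ≤ popLoss d m D φmap 0 θt := hchain
  -- probability bound
  haveI : IsProbabilityMeasure (stdGaussian m v) := by
    rw [_root_.stdGaussian]
    exact Measure.isProbabilityMeasure_map
      ((EuclideanSpace.equiv (Fin m) ℝ).symm.continuous.measurable.aemeasurable)
  set L := b.repr with hL
  set S : Set (EuclideanSpace ℝ (Fin m)) := {y | ∑ i ∈ T, (y i) ^ 2 ≤ A} with hS
  have hSm : MeasurableSet S := by
    refine measurableSet_le ?_ measurable_const
    exact Finset.measurable_sum _ fun i _ =>
      (((measurable_pi_apply i).comp (WithLp.measurable_ofLp 2 _)).pow_const 2)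
  have hGcS : Gᶜ ⊆ L ⁻¹' S := by
    intro θ hθ
    have h1 : F θ < A := not_le.mp hθ
    have h2 : ∀ i ∈ T, ⟪b i, θ⟫ ^ 2 = (L θ i) ^ 2 := by
      intro i _
      rw [hL, b.repr_apply_apply]
    have : ∑ i ∈ T, (L θ i) ^ 2 ≤ A := by
      rw [← Finset.sum_congr rfl h2]
      exact h1.le
    exact this
  have hmapS : stdGaussian m v (L ⁻¹' S) ≤ ENNReal.ofReal (Real.exp (-(k : ℝ) / 32)) := by
    have h1 : stdGaussian m v (L ⁻¹' S) = ((stdGaussian m v).map L) S := by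
      rw [Measure.map_apply (L.continuous.measurable) hSm]
    rw [h1, stdGaussian_map_isometry m hv.ne' L, _root_.stdGaussian,
      Measure.map_apply ((EuclideanSpace.equiv (Fin m) ℝ).symm.continuous.measurable) hSm]
    have hpre : (⇑(EuclideanSpace.equiv (Fin m) ℝ).symm) ⁻¹' S
        = {x : Fin m → ℝ | ∑ i ∈ T, (x i) ^ 2 ≤ (k : ℝ) * v / 2} := rfl
    rw [hpre]
    exact pi_gaussian_chernoff m k hv T hTcard
  have hGc : stdGaussian m v Gᶜ ≤ ENNReal.ofReal (Real.exp (-(k : ℝ) / 32)) :=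
    le_trans (measure_mono hGcS) hmapS
  have hGlower : 1 - ENNReal.ofReal (Real.exp (-(k : ℝ) / 32)) ≤ stdGaussian m v G := by
    have htotal : stdGaussian m v G + stdGaussian m v Gᶜ = 1 :=
      prob_add_prob_compl hGm
    have : (1 : ℝ≥0∞) ≤ stdGaussian m v G + ENNReal.ofReal (Real.exp (-(k : ℝ) / 32)) := by
      rw [← htotal]
      exact add_le_add le_rfl hGc
    exact tsub_le_iff_right.mpr this
  refine le_trans ?_ (le_trans hGlower (measure_mono hsub))
  -- final real arithmetic
  rw [hcast]
  set ε : ℝ := Real.exp (-(k : ℝ) / 32) with hε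
  have hεpos : 0 < ε := Real.exp_pos _
  have hε1 : ε ≤ 1 := by
    rw [hε, ← Real.exp_zero]
    apply Real.exp_le_exp.mpr
    have : (0:ℝ) ≤ (k:ℝ) := Nat.cast_nonneg k
    linarith
  rw [show (1 : ℝ≥0∞) = ENNReal.ofReal 1 from ENNReal.ofReal_one.symm,
    ← ENNReal.ofReal_sub 1 hεpos.le]
  exact ENNReal.ofReal_le_ofReal (by linarith)



end ZeroTeacherAux

end
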